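/- Let M, a, s be positive integers with M > 1 such that ∑_{i=0}^{M-1} (a+i)^2 = s^2, and suppose M = 24·m₁ for a positive integer m₁. Then for every prime p > 3 with p ≢ 1 (mod 12) and p ≢ 11 (mod 12), there do not exist integers i ≥ 0 and q ≥ 1 with p ∤ q such that m₁ = p^(2i+1)·q; equivalently, the exact power of p dividing m₁ is even. -/

import Mathlib

lemma not_isSquare_two_zmod3 : ¬ IsSquare (2 : ZMod 3) := by decide

lemma sum_sq_id (a : ℕ) (M : ℕ) :
    12 * ∑ i ∈ Finset.range M, ((a : ℤ) + i) ^ 2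
      = M * (3 * (2 * a + M - 1) ^ 2 + M ^ 2 - 1) := by
  induction M with
  | zero => simp
  | succ n ih =>
    rw [Finset.sum_range_succ, mul_add, ih]
    push_cast
    ring

theorem stmt (M a s m₁ : ℕ) (hM : 1 < M) (ha : 1 ≤ a) (hs : 1 ≤ s)
    (hsum : ∑ i ∈ Finset.range M, (a + i) ^ 2 = s ^ 2)
    (hm : 1 ≤ m₁) (hMeq : M = 24 * m₁) :
    ∀ p : ℕ, p.Prime → 3 < p → p % 12 ≠ 1 → p % 12 ≠ 11 →
      ¬ ∃ i q : ℕ, 1 ≤ q ∧ ¬ p ∣ q ∧ m₁ = p ^ (2 * i + 1) * q := by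
  intro p hp hp3 h1 h11 ⟨i, q, hq1, hpq, hmeq⟩
  haveI : Fact p.Prime := ⟨hp⟩
  set c : ℕ := 2 * a + M - 1 with hc_def
  have hc : c + 1 = 2 * a + M := by omega
  set N : ℕ := 3 * c ^ 2 + M ^ 2 - 1 with hN_def
  have hNpos : 1 ≤ 3 * c ^ 2 + M ^ 2 := by nlinarith
  have hN : N + 1 = 3 * c ^ 2 + M ^ 2 := by omega
  have hz : 12 * ((s : ℤ)) ^ 2 = M * (3 * (2 * a + M - 1) ^ 2 + M ^ 2 - 1) := by
    have h' : (∑ i ∈ Finset.range M, ((a : ℤ) + (i : ℤ)) ^ 2) = (s : ℤ) ^ 2 := by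
      exact_mod_cast hsum
    rw [← h', sum_sq_id]
  have hcz : (c : ℤ) = 2 * a + M - 1 := by
    have : ((c : ℤ) + 1) = 2 * a + M := by exact_mod_cast congrArg (Nat.cast : ℕ → ℤ) hc
    linarith
  have hNz : (N : ℤ) = 3 * (c : ℤ) ^ 2 + M ^ 2 - 1 := by
    have : ((N : ℤ) + 1) = 3 * (c : ℤ) ^ 2 + M ^ 2 := by
      exact_mod_cast congrArg (Nat.cast : ℕ → ℤ) hN
    linarith
  have hMz : (M : ℤ) = 24 * m₁ := by exact_mod_cast congrArg (Nat.cast : ℕ → ℤ) hMeq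
  rw [← hcz] at hz
  have hkey : s ^ 2 = 2 * m₁ * N := by
    have h12 : 12 * ((s : ℤ)) ^ 2 = 12 * (2 * m₁ * (N : ℤ)) := by
      rw [hNz]
      linear_combination hz + (3 * (c : ℤ) ^ 2 + (M : ℤ) ^ 2 - 1) * hMz
    have : ((s : ℤ)) ^ 2 = 2 * m₁ * (N : ℤ) := by linarith
    exact_mod_cast this
  have hs0 : s ≠ 0 := by omega
  have hm0 : m₁ ≠ 0 := by omega
  have hN0 : N ≠ 0 := by
    have : 2 ≤ M := hM
    nlinarith [hN]
  have hq0 : q ≠ 0 := by omega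
  have hf := congrArg (fun n => n.factorization p) hkey
  simp only [Nat.factorization_pow, Nat.factorization_mul (by norm_num : (2:ℕ) ≠ 0) hm0,
    Nat.factorization_mul (by positivity : 2 * m₁ ≠ 0) hN0, Finsupp.coe_add, Pi.add_apply,
    Finsupp.smul_apply, smul_eq_mul, Finsupp.coe_smul, Pi.smul_apply] at hf
  have h2 : (Nat.factorization 2) p = 0 := by
    apply Nat.factorization_eq_zero_of_not_dvd
    intro h
    have := Nat.le_of_dvd (by norm_num) h
    omega
  have hm₁f : (Nat.factorization m₁) p = 2 * i + 1 := by
    rw [hmeq, Nat.factorization_mul (by positivity) hq0, Nat.Prime.factorization_pow hp]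
    simp [Nat.factorization_eq_zero_of_not_dvd hpq]
  rw [h2, hm₁f] at hf
  have hNdvd : p ∣ N := by
    apply Nat.dvd_of_factorization_pos
    omega
  have hMdvd : p ∣ M := by
    rw [hMeq, hmeq]
    exact Dvd.dvd.mul_left (Dvd.dvd.mul_right (dvd_pow_self p (by omega)) q) 24
  have hNm : ((N : ZMod p)) = 0 := (ZMod.natCast_eq_zero_iff N p).mpr hNdvd
  have hMm : ((M : ZMod p)) = 0 := (ZMod.natCast_eq_zero_iff M p).mpr hMdvd
  have h3c : (3 : ZMod p) * (c : ZMod p) ^ 2 = 1 := by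
    have := congrArg (Nat.cast : ℕ → ZMod p) hN
    push_cast at this
    rw [hNm, hMm] at this
    linear_combination -this
  have hSq : IsSquare (3 : ZMod p) := by
    refine ⟨3 * (c : ZMod p), ?_⟩
    linear_combination -3 * h3c
  have hodd : ¬ (2 ∣ p) := fun h => by
    have := (Nat.prime_dvd_prime_iff_eq (by norm_num) hp).mp h; omega
  have h3d : ¬ (3 ∣ p) := fun h => by
    have := (Nat.prime_dvd_prime_iff_eq (by norm_num) hp).mp h; omega
  have hmod : p % 12 = 5 ∨ p % 12 = 7 := by omega
  haveI : Fact (Nat.Prime 3) := ⟨by norm_num⟩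
  have hcast3 : ((3 : ℕ) : ZMod p) = (3 : ZMod p) := by push_cast; ring
  rcases hmod with h5 | h7
  · have h4 : p % 4 = 1 := by omega
    have hsq2 := (ZMod.exists_sq_eq_prime_iff_of_mod_four_eq_one (p := p) (q := 3) h4
      (by norm_num)).mp (hcast3 ▸ hSq)
    rw [show ((p : ZMod 3)) = ((p % 3 : ℕ) : ZMod 3) from (ZMod.natCast_mod p 3).symm,
      show p % 3 = 2 by omega] at hsq2
    have : ((2 : ℕ) : ZMod 3) = (2 : ZMod 3) := by push_cast; ring
    rw [this] at hsq2
    exact not_isSquare_two_zmod3 hsq2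
  · have h4 : p % 4 = 3 := by omega
    have hsq2 := (ZMod.exists_sq_eq_prime_iff_of_mod_four_eq_three (p := p) (q := 3) h4
      (by norm_num) (by omega)).mp (hcast3 ▸ hSq)
    apply hsq2
    rw [show ((p : ZMod 3)) = ((p % 3 : ℕ) : ZMod 3) from (ZMod.natCast_mod p 3).symm,
      show p % 3 = 1 by omega]
    simp
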